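/- arXiv:2111.02104 — 3 statements merged into one kernel-verified Lean document; each statement's English description precedes it below -/
import Mathlib

section
/- Let H, m, d be positive integers, let U : ℝ^H → ℝ^m, V : ℝ^d → ℝ^m and W : ℝ^m → ℝ^d be linear maps, let S be a nonempty finite set, and let z, z' : S → ℝ^d. For a trajectory representation τ ∈ ℝ^H define the trajectorial recall loss restricted to the common transitions S by L(τ) = Σ_{s ∈ S} ‖W(Uτ + V(z s)) − z' s‖². Then for any two trajectory representations τ₁, τ₂ ∈ ℝ^H one has L(τ₁) + L(τ₂) ≥ (|S|/2)·‖W(U(τ₁ − τ₂))‖². -/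
/-- Appendix A (TR loss for a linear trajectory model): if two trajectories share
the common-transition set `S` (same input `z s` and same target `z' s`), then the
sum of their TR losses bounds `(|S|/2) · ‖W (U (τ₁ - τ₂))‖²` from above. -/
theorem tr_loss_lower_bound
    (H m d : ℕ) (hH : 0 < H) (hm : 0 < m) (hd : 0 < d)
    (U : EuclideanSpace ℝ (Fin H) →ₗ[ℝ] EuclideanSpace ℝ (Fin m))
    (V : EuclideanSpace ℝ (Fin d) →ₗ[ℝ] EuclideanSpace ℝ (Fin m))
    (W : EuclideanSpace ℝ (Fin m) →ₗ[ℝ] EuclideanSpace ℝ (Fin d))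
    (S : Type) [Fintype S] [Nonempty S]
    (z z' : S → EuclideanSpace ℝ (Fin d))
    (L : EuclideanSpace ℝ (Fin H) → ℝ)
    (hL : ∀ τ, L τ = ∑ s : S, ‖W (U τ + V (z s)) - z' s‖ ^ 2)
    (τ₁ τ₂ : EuclideanSpace ℝ (Fin H)) :
    L τ₁ + L τ₂ ≥ ((Fintype.card S : ℝ) / 2) * ‖W (U (τ₁ - τ₂))‖ ^ 2 := by
  have key : ∀ s : S, (1:ℝ)/2 * ‖W (U (τ₁ - τ₂))‖ ^ 2 ≤
      ‖W (U τ₁ + V (z s)) - z' s‖ ^ 2 + ‖W (U τ₂ + V (z s)) - z' s‖ ^ 2 := by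
    intro s
    set a := W (U τ₁ + V (z s)) - z' s
    set b := W (U τ₂ + V (z s)) - z' s
    have hab : W (U (τ₁ - τ₂)) = a - b := by
      simp [a, b, map_sub, map_add]
    have htri : ‖a - b‖ ≤ ‖a‖ + ‖b‖ := norm_sub_le a b
    have ha : (0:ℝ) ≤ ‖a‖ := norm_nonneg a
    have hb : (0:ℝ) ≤ ‖b‖ := norm_nonneg b
    rw [hab]
    nlinarith [sq_nonneg (‖a‖ - ‖b‖), sq_nonneg (‖a - b‖), norm_nonneg (a-b)]
  rw [hL, hL, ← Finset.sum_add_distrib]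
  calc ((Fintype.card S : ℝ) / 2) * ‖W (U (τ₁ - τ₂))‖ ^ 2
      = ∑ _s : S, (1:ℝ)/2 * ‖W (U (τ₁ - τ₂))‖ ^ 2 := by
        rw [Finset.sum_const, Finset.card_univ, nsmul_eq_mul]; ring
    _ ≤ ∑ s : S, (‖W (U τ₁ + V (z s)) - z' s‖ ^ 2 + ‖W (U τ₂ + V (z s)) - z' s‖ ^ 2) :=
        Finset.sum_le_sum fun s _ => key s
end

section
/- Let H, m, d be positive integers, let U : ℝ^H → ℝ^m, V : ℝ^d → ℝ^m and W : ℝ^m → ℝ^d be linear maps, let S be a nonempty finite set, and let z, z' : S → ℝ^d. Define L(τ) = Σ_{s ∈ S} ‖W(Uτ + V(z s)) − z' s‖² for τ ∈ ℝ^H. Suppose σ > 0 satisfies ‖W(U x)‖ ≥ σ·‖x‖ for all x ∈ ℝ^H (i.e., σ is a lower bound on the smallest singular value of the injective composite map W∘U). Then for all τ₁, τ₂ ∈ ℝ^H: ‖τ₁ − τ₂‖² ≤ 2·(L(τ₁) + L(τ₂)) / (|S|·σ²). In particular, as the TR losses decrease and the number of common transitions |S| increases, the distance between the two trajectory representations decreases.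 -/
/-- Appendix A conclusion: if the composite read-out map `W ∘ U` has smallest
singular value at least `σ > 0`, then trajectories with small TR losses over a
common transition set `S` have nearby representations:
`‖τ₁ - τ₂‖² ≤ 2 (L τ₁ + L τ₂) / (|S| σ²)`. -/
theorem tr_loss_controls_representation_distance
    (H m d : ℕ) (hH : 0 < H) (hm : 0 < m) (hd : 0 < d)
    (U : EuclideanSpace ℝ (Fin H) →ₗ[ℝ] EuclideanSpace ℝ (Fin m))
    (V : EuclideanSpace ℝ (Fin d) →ₗ[ℝ] EuclideanSpace ℝ (Fin m))
    (W : EuclideanSpace ℝ (Fin m) →ₗ[ℝ] EuclideanSpace ℝ (Fin d))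
    (S : Type) [Fintype S] [Nonempty S]
    (z z' : S → EuclideanSpace ℝ (Fin d))
    (L : EuclideanSpace ℝ (Fin H) → ℝ)
    (hL : ∀ τ, L τ = ∑ s : S, ‖W (U τ + V (z s)) - z' s‖ ^ 2)
    (σ : ℝ) (hσ : 0 < σ)
    (hsing : ∀ x : EuclideanSpace ℝ (Fin H), ‖W (U x)‖ ≥ σ * ‖x‖)
    (τ₁ τ₂ : EuclideanSpace ℝ (Fin H)) :
    ‖τ₁ - τ₂‖ ^ 2 ≤ 2 * (L τ₁ + L τ₂) / ((Fintype.card S : ℝ) * σ ^ 2) := by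
  set n : ℝ := (Fintype.card S : ℝ) with hn
  have hnpos : 0 < n := by
    rw [hn]; exact_mod_cast Fintype.card_pos (α := S)
  have hdenom : 0 < n * σ ^ 2 := by positivity
  -- key pointwise bound
  have key : ∀ s : S, σ ^ 2 * ‖τ₁ - τ₂‖ ^ 2 ≤
      2 * ‖W (U τ₁ + V (z s)) - z' s‖ ^ 2 + 2 * ‖W (U τ₂ + V (z s)) - z' s‖ ^ 2 := by
    intro s
    have hWU : W (U (τ₁ - τ₂)) =
        (W (U τ₁ + V (z s)) - z' s) - (W (U τ₂ + V (z s)) - z' s) := by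
      simp only [map_sub, map_add]
      abel
    have h1 : σ * ‖τ₁ - τ₂‖ ≤ ‖W (U (τ₁ - τ₂))‖ := hsing _
    have h2 : ‖W (U (τ₁ - τ₂))‖ ≤
        ‖W (U τ₁ + V (z s)) - z' s‖ + ‖W (U τ₂ + V (z s)) - z' s‖ := by
      rw [hWU]; exact norm_sub_le _ _
    have h3 : σ * ‖τ₁ - τ₂‖ ≤
        ‖W (U τ₁ + V (z s)) - z' s‖ + ‖W (U τ₂ + V (z s)) - z' s‖ := h1.trans h2
    have h4 : (σ * ‖τ₁ - τ₂‖) ^ 2 ≤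
        (‖W (U τ₁ + V (z s)) - z' s‖ + ‖W (U τ₂ + V (z s)) - z' s‖) ^ 2 := by
      apply sq_le_sq' _ h3
      have : 0 ≤ σ * ‖τ₁ - τ₂‖ := by positivity
      linarith
    nlinarith [sq_nonneg (‖W (U τ₁ + V (z s)) - z' s‖ - ‖W (U τ₂ + V (z s)) - z' s‖)]
  have hsum : n * (σ ^ 2 * ‖τ₁ - τ₂‖ ^ 2) ≤ 2 * (L τ₁ + L τ₂) := by
    have h := Finset.sum_le_sum (fun s (_ : s ∈ Finset.univ) => key s)
    simp only [Finset.sum_const, Finset.card_univ, nsmul_eq_mul,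
      Finset.sum_add_distrib, ← Finset.mul_sum] at h
    rw [hL, hL]
    rw [hn]
    linarith
  rw [le_div_iff₀ hdenom]
  nlinarith [hsum]
end

section
/- Let T be a nonempty finite type (the trajectory space), A a nonempty finite type (the action space), γ a real with 0 ≤ γ < 1, K ≥ 1 an integer, r : T → A → ℝ, and P : A → T → T → ℝ a stochastic kernel, i.e. P a x y ≥ 0 for all a, x, y and Σ_{y} P a x y = 1 for all a, x. Define the operator H on functions f : T → ℝ by H f x = (1/K)·max_{a ∈ A} Σ_{y} P a x y · ( r x a + γ·f y ) + ((K−1)/K)·f x. Then for all f₁, f₂ : T → ℝ, sup_{x ∈ T} |H f₁ x − H f₂ x| ≤ ((γ + K − 1)/K) · sup_{x ∈ T} |f₁ x − f₂ x|. -/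
open Finset

lemma abs_sup'_sub_sup'_le {A : Type*} [Fintype A] [Nonempty A]
    (u v : A → ℝ) (c : ℝ) (h : ∀ a, |u a - v a| ≤ c) :
    |univ.sup' univ_nonempty u - univ.sup' univ_nonempty v| ≤ c := by
  rw [abs_sub_le_iff]
  constructor
  · rw [sub_le_iff_le_add]
    apply Finset.sup'_le
    intro a _
    have := h a
    have hle : u a ≤ v a + c := by
      have := abs_le.mp this
      linarith [this.2]
    linarith [Finset.le_sup' v (Finset.mem_univ a)]
  · rw [sub_le_iff_le_add]
    apply Finset.sup'_le
    intro a _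
    have := abs_le.mp (h a)
    have hle : v a ≤ u a + c := by linarith [this.1]
    linarith [Finset.le_sup' u (Finset.mem_univ a)]

/-- Appendix C, key lemma of Proposition 1: the expected refine operator
`H f x = (1/K)·max_a Σ_y P a x y (r x a + γ f y) + ((K-1)/K)·f x` is a sup-norm
contraction with modulus `(γ + K - 1)/K`. -/
theorem refine_operator_contraction
    (T : Type*) [Fintype T] [Nonempty T]
    (A : Type*) [Fintype A] [Nonempty A]
    (γ : ℝ) (hγ0 : 0 ≤ γ) (hγ1 : γ < 1)
    (K : ℕ) (hK : 1 ≤ K)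
    (r : T → A → ℝ)
    (P : A → T → T → ℝ)
    (hP0 : ∀ a x y, 0 ≤ P a x y)
    (hP1 : ∀ a x, ∑ y : T, P a x y = 1)
    (H : (T → ℝ) → T → ℝ)
    (hH : ∀ f x, H f x =
      (1 / (K : ℝ)) *
          (univ.sup' univ_nonempty fun a => ∑ y : T, P a x y * (r x a + γ * f y)) +
        (((K : ℝ) - 1) / (K : ℝ)) * f x)
    (f₁ f₂ : T → ℝ) :
    (univ.sup' univ_nonempty fun x => |H f₁ x - H f₂ x|) ≤
      ((γ + (K : ℝ) - 1) / (K : ℝ)) *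
        univ.sup' univ_nonempty fun x => |f₁ x - f₂ x| := by
  set M : ℝ := univ.sup' univ_nonempty fun x => |f₁ x - f₂ x| with hM
  have hMnn : 0 ≤ M := by
    obtain ⟨x⟩ := (inferInstance : Nonempty T)
    rw [hM]
    exact (abs_nonneg (f₁ x - f₂ x)).trans (Finset.le_sup' (fun x => |f₁ x - f₂ x|) (mem_univ x))
  have hMle : ∀ y, |f₁ y - f₂ y| ≤ M := by
    intro y; rw [hM]; exact Finset.le_sup' (fun x => |f₁ x - f₂ x|) (mem_univ y)
  have hKpos : (0:ℝ) < (K:ℝ) := by exact_mod_cast hK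
  apply Finset.sup'_le
  intro x _
  rw [hH, hH]
  have key : ∀ a, |(∑ y : T, P a x y * (r x a + γ * f₁ y)) -
      (∑ y : T, P a x y * (r x a + γ * f₂ y))| ≤ γ * M := by
    intro a
    rw [← Finset.sum_sub_distrib]
    have : ∀ y, P a x y * (r x a + γ * f₁ y) - P a x y * (r x a + γ * f₂ y)
        = γ * (P a x y * (f₁ y - f₂ y)) := by intro y; ring
    simp_rw [this, ← Finset.mul_sum, abs_mul, abs_of_nonneg hγ0]
    gcongr
    calc |∑ y : T, P a x y * (f₁ y - f₂ y)| ≤ ∑ y : T, |P a x y * (f₁ y - f₂ y)| :=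
          Finset.abs_sum_le_sum_abs _ _
      _ ≤ ∑ y : T, P a x y * M := by
          apply Finset.sum_le_sum
          intro y _
          rw [abs_mul, abs_of_nonneg (hP0 a x y)]
          exact mul_le_mul_of_nonneg_left (hMle y) (hP0 a x y)
      _ = M := by rw [← Finset.sum_mul, hP1, one_mul]
  have hsup := abs_sup'_sub_sup'_le
    (fun a => ∑ y : T, P a x y * (r x a + γ * f₁ y))
    (fun a => ∑ y : T, P a x y * (r x a + γ * f₂ y)) (γ * M) key
  have h2 : |f₁ x - f₂ x| ≤ M := hMle x
  set S₁ := univ.sup' univ_nonempty fun a => ∑ y : T, P a x y * (r x a + γ * f₁ y)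
  set S₂ := univ.sup' univ_nonempty fun a => ∑ y : T, P a x y * (r x a + γ * f₂ y)
  have : (1 / (K:ℝ)) * S₁ + ((K:ℝ) - 1) / K * f₁ x -
      ((1 / (K:ℝ)) * S₂ + ((K:ℝ) - 1) / K * f₂ x)
      = (1 / (K:ℝ)) * (S₁ - S₂) + ((K:ℝ) - 1) / K * (f₁ x - f₂ x) := by ring
  rw [this]
  have hK1 : (0:ℝ) ≤ (K:ℝ) - 1 := by
    have : (1:ℝ) ≤ (K:ℝ) := by exact_mod_cast hK
    linarith
  calc |(1 / (K:ℝ)) * (S₁ - S₂) + ((K:ℝ) - 1) / K * (f₁ x - f₂ x)|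
      ≤ |(1 / (K:ℝ)) * (S₁ - S₂)| + |((K:ℝ) - 1) / K * (f₁ x - f₂ x)| := abs_add_le _ _
    _ = (1 / (K:ℝ)) * |S₁ - S₂| + ((K:ℝ) - 1) / K * |f₁ x - f₂ x| := by
        rw [abs_mul, abs_mul, abs_of_nonneg (by positivity : (0:ℝ) ≤ 1/(K:ℝ)),
          abs_of_nonneg (by positivity : (0:ℝ) ≤ ((K:ℝ)-1)/K)]
    _ ≤ (1 / (K:ℝ)) * (γ * M) + ((K:ℝ) - 1) / K * M := by gcongr <;> positivity
    _ = ((γ + (K:ℝ) - 1) / K) * M := by field_simp; ring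
end
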